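/- Let k ≥ 2 and let A = {a_0, a_1, ..., a_k} be a set of integers with 0 = a_0 < a_1 < ... < a_k. Let t and h be positive integers and suppose an integer a has a representation a = x_1·a_1 + x_2·a_2 + ... + x_k·a_k with nonnegative integers x_i satisfying x_1 + x_2 + ... + x_k = h + 1 and x_1 ≥ t·a_2. Then a ∈ (hA)^{(t)}, i.e., a has at least t representations as a sum of h elements of A. -/

import Mathlib

/-- `f : Fin h → ℤ` is a representation of `n` as a sum of `h` elements of `A`
(written in nondecreasing order). -/
def IsRep (A : Set ℤ) (h : ℕ) (n : ℤ) (f : Fin h → ℤ) : Prop :=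
  (∀ i, f i ∈ A) ∧ Monotone f ∧ ∑ i, f i = n

/-- `(hA)^{(t)}`: integers having at least `t` representations as a sum of `h`
elements of `A`. -/
def hFoldT (A : Set ℤ) (h t : ℕ) : Set ℤ :=
  {n | ∃ S : Finset (Fin h → ℤ), t ≤ S.card ∧ ∀ f ∈ S, IsRep A h n f}

/-- List consisting of `c 0` copies of `v 0`, then `c 1` copies of `v 1`, ..., up to `v (n-1)`. -/
def Jlist (c : ℕ → ℕ) (v : ℕ → ℤ) : ℕ → List ℤ
  | 0 => []
  | n+1 => Jlist c v n ++ List.replicate (c n) (v n)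

lemma Jlist_length (c : ℕ → ℕ) (v : ℕ → ℤ) :
    ∀ n, (Jlist c v n).length = ∑ i ∈ Finset.range n, c i
  | 0 => rfl
  | n+1 => by
      simp [Jlist, Jlist_length c v n, Finset.sum_range_succ]

lemma Jlist_sum (c : ℕ → ℕ) (v : ℕ → ℤ) :
    ∀ n, (Jlist c v n).sum = ∑ i ∈ Finset.range n, (c i : ℤ) * v i
  | 0 => rfl
  | n+1 => by
      simp [Jlist, Jlist_sum c v n, Finset.sum_range_succ, mul_comm]

lemma Jlist_mem (c : ℕ → ℕ) (v : ℕ → ℤ) :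
    ∀ n, ∀ y ∈ Jlist c v n, ∃ i < n, y = v i
  | 0 => by simp [Jlist]
  | n+1 => by
      intro y hy
      rcases List.mem_append.1 hy with hy | hy
      · obtain ⟨i, hi, rfl⟩ := Jlist_mem c v n y hy
        exact ⟨i, by omega, rfl⟩
      · exact ⟨n, by omega, List.eq_of_mem_replicate hy⟩

lemma Jlist_sorted (c : ℕ → ℕ) (v : ℕ → ℤ) :
    ∀ n, (∀ i j, i ≤ j → j < n → v i ≤ v j) → (Jlist c v n).Pairwise (· ≤ ·)
  | 0, _ => List.Pairwise.nil
  | n+1, hv => by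
      refine List.pairwise_append.2 ⟨Jlist_sorted c v n (fun i j hij hj => hv i j hij (by omega)),
        List.pairwise_replicate.2 (Or.inr le_rfl), ?_⟩
      intro y hy z hz
      obtain ⟨i, hi, rfl⟩ := Jlist_mem c v n y hy
      rw [List.eq_of_mem_replicate hz]
      exact hv i n (by omega) (by omega)

lemma Jlist_count (c : ℕ → ℕ) (v : ℕ → ℤ) (z : ℤ) :
    ∀ n, (Jlist c v n).count z = ∑ i ∈ Finset.range n, if v i = z then c i else 0
  | 0 => rfl
  | n+1 => by
      simp only [Jlist, List.count_append, Jlist_count c v z n, Finset.sum_range_succ,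
        List.count_replicate]
      congr 1
      by_cases hvz : v n = z <;> simp [hvz]

lemma isRep_of_list (A : Set ℤ) (n : ℤ) (L : List ℤ) (h : ℕ) (hlen : L.length = h)
    (hmem : ∀ y ∈ L, y ∈ A) (hsort : L.Pairwise (· ≤ ·)) (hsum : L.sum = n) :
    IsRep A h n (fun m : Fin h => L.getD m.val 0) := by
  subst hlen
  have hget : ∀ m : Fin L.length, L.getD m.val 0 = L.get m := fun m => by
    simp [List.getD_eq_getElem L 0 m.2]
  refine ⟨fun m => ?_, ?_, ?_⟩
  · show L.getD m.val 0 ∈ A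
    rw [hget]
    exact hmem _ (List.get_mem L m)
  · intro m m' hmm
    show L.getD m.val 0 ≤ L.getD m'.val 0
    rw [hget, hget]
    rcases eq_or_lt_of_le hmm with heq | hlt
    · rw [heq]
    · exact List.pairwise_iff_get.1 hsort m m' hlt
  · have he : (fun m : Fin L.length => L.getD m.val 0) = L.get := funext hget
    rw [he, ← hsum, ← List.sum_ofFn, List.ofFn_get]

theorem stmt7 (k : ℕ) (hk : 2 ≤ k) (a : ℕ → ℤ) (ha0 : a 0 = 0)
    (hinc : ∀ i < k, a i < a (i + 1))
    (t h : ℕ) (ht : 0 < t) (hh : 0 < h)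
    (av : ℤ) (x : Fin k → ℤ) (hx0 : ∀ i, 0 ≤ x i)
    (hsum : av = ∑ i : Fin k, x i * a (i.val + 1))
    (hcount : (∑ i : Fin k, x i) = (h : ℤ) + 1)
    (hx1 : (t : ℤ) * a 2 ≤ x ⟨0, by omega⟩) :
    av ∈ hFoldT {y | ∃ i ≤ k, y = a i} h t := by
  obtain ⟨m, rfl⟩ : ∃ m, k = m + 2 := ⟨k - 2, by omega⟩
  -- basic facts about a
  have hamono : ∀ i j, i ≤ j → j ≤ m + 2 → a i ≤ a j := by
    have key : ∀ d i, i + d ≤ m + 2 → a i ≤ a (i + d) := by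
      intro d
      induction d with
      | zero => intro i _; simp
      | succ d ih =>
          intro i hi
          have h1 := ih i (by omega)
          have h2 := hinc (i + d) (by omega)
          have h3 : i + (d + 1) = (i + d) + 1 := by ring
          rw [h3]
          linarith
    intro i j hij hj
    have := key (j - i) i (by omega)
    rwa [Nat.add_sub_cancel' hij] at this
  have ha1 : 0 < a 1 := by
    have h01 := hinc 0 (by omega)
    rw [ha0] at h01
    simpa using h01
  have ha2 : a 1 < a 2 := hinc 1 (by omega)
  have hapos : ∀ i, 1 ≤ i → i ≤ m + 2 → 0 < a i := by
    intro i h1 h2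
    have := hamono 1 i h1 h2
    omega
  -- natural number versions
  set A1 : ℕ := (a 1).toNat with hA1
  set A2 : ℕ := (a 2).toNat with hA2
  have hcA1 : (A1 : ℤ) = a 1 := Int.toNat_of_nonneg (by omega)
  have hcA2 : (A2 : ℤ) = a 2 := Int.toNat_of_nonneg (by omega)
  have hA12 : A1 < A2 := by omega
  have hA1pos : 0 < A1 := by omega
  set X : ℕ → ℕ := fun i => if hi : i < m + 2 then (x ⟨i, hi⟩).toNat else 0 with hX
  have hcX : ∀ i (hi : i < m + 2), (X i : ℤ) = x ⟨i, hi⟩ := by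
    intro i hi
    simp only [hX, dif_pos hi]
    exact Int.toNat_of_nonneg (hx0 _)
  -- generic sum splitting
  have hrange : ∀ (F : ℕ → ℤ), ∑ i ∈ Finset.range (m + 2), F i
      = F 0 + F 1 + ∑ i ∈ Finset.range m, F (i + 2) := by
    intro F
    rw [Finset.sum_range_succ' F (m + 1), Finset.sum_range_succ' (fun i => F (i + 1)) m]
    ring
  have hfin : ∀ (F : ℕ → ℤ) (G : Fin (m + 2) → ℤ), (∀ i (hi : i < m + 2), F i = G ⟨i, hi⟩) →
      ∑ i, G i = ∑ i ∈ Finset.range (m + 2), F i := by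
    intro F G hFG
    rw [← Fin.sum_univ_eq_sum_range F (m + 2)]
    exact Finset.sum_congr rfl fun i _ => by rw [hFG i.val i.2]
  -- split the sums
  have hxsum : av = (X 0 : ℤ) * a 1 + (X 1 : ℤ) * a 2
      + ∑ i ∈ Finset.range m, (X (i + 2) : ℤ) * a (i + 3) := by
    rw [hsum, hfin (fun i => (X i : ℤ) * a (i + 1)) _
      (fun i hi => by simp [hcX i hi]), hrange]
  have hXcount : X 0 + X 1 + ∑ i ∈ Finset.range m, X (i + 2) = h + 1 := by
    have hz : ((X 0 + X 1 + ∑ i ∈ Finset.range m, X (i + 2) : ℕ) : ℤ) = (h : ℤ) + 1 := by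
      push_cast
      rw [← hcount, hfin (fun i => (X i : ℤ)) _ (fun i hi => by simp [hcX i hi]), hrange]
    exact_mod_cast hz
  have hX0 : t * A2 ≤ X 0 := by
    have h1 : ((t * A2 : ℕ) : ℤ) ≤ (X 0 : ℤ) := by
      rw [hcX 0 (by omega)]
      push_cast
      rw [hcA2]
      exact hx1
    exact_mod_cast h1
  -- the coefficient functions
  set c : ℕ → ℕ → ℕ := fun j i =>
    if i = 0 then j * (A2 - A1) - 1
    else if i = 1 then X 0 - j * A2
    else if i = 2 then X 1 + j * A1
    else X (i - 1) with hc
  -- per-j arithmetic facts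
  have hjfacts : ∀ j, 1 ≤ j → j ≤ t →
      j * A1 ≤ j * A2 ∧ j * (A2 - A1) = j * A2 - j * A1 ∧ 1 ≤ j * (A2 - A1)
      ∧ j * A2 ≤ X 0 := by
    intro j hj1 hjt
    refine ⟨Nat.mul_le_mul_left j (le_of_lt hA12), Nat.mul_sub j A2 A1, ?_, ?_⟩
    · calc 1 = 1 * 1 := rfl
        _ ≤ j * (A2 - A1) := Nat.mul_le_mul hj1 (by omega)
    · calc j * A2 ≤ t * A2 := Nat.mul_le_mul_right A2 hjt
        _ ≤ X 0 := hX0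
  -- the lists
  set L : ℕ → List ℤ := fun j => Jlist (c j) a (m + 3) with hL
  have hctail : ∀ j i, c j (i + 3) = X (i + 2) := by
    intro j i
    simp only [hc]
    rw [if_neg (by omega), if_neg (by omega), if_neg (by omega)]
    congr 1
  -- lengths
  have hlen : ∀ j, 1 ≤ j → j ≤ t → (L j).length = h := by
    intro j hj1 hjt
    obtain ⟨f1, f2, f3, f4⟩ := hjfacts j hj1 hjt
    rw [hL]
    rw [Jlist_length]
    have e1 : ∑ i ∈ Finset.range (m + 3), c j i
        = c j 0 + c j 1 + c j 2 + ∑ i ∈ Finset.range m, c j (i + 3) := by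
      rw [Finset.sum_range_succ' (c j) (m + 2),
        Finset.sum_range_succ' (fun i => c j (i + 1)) (m + 1),
        Finset.sum_range_succ' (fun i => c j (i + 2)) m]
      ring
    rw [e1]
    have e2 : ∑ i ∈ Finset.range m, c j (i + 3) = ∑ i ∈ Finset.range m, X (i + 2) :=
      Finset.sum_congr rfl fun i _ => hctail j i
    rw [e2]
    simp only [hc]
    norm_num
    omega
  -- sums
  have hsums : ∀ j, 1 ≤ j → j ≤ t → (L j).sum = av := by
    intro j hj1 hjt
    obtain ⟨f1, f2, f3, f4⟩ := hjfacts j hj1 hjt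
    rw [hL, Jlist_sum]
    have e1 : ∑ i ∈ Finset.range (m + 3), (c j i : ℤ) * a i
        = (c j 0 : ℤ) * a 0 + (c j 1 : ℤ) * a 1 + (c j 2 : ℤ) * a 2
          + ∑ i ∈ Finset.range m, (c j (i + 3) : ℤ) * a (i + 3) := by
      rw [Finset.sum_range_succ' (fun i => (c j i : ℤ) * a i) (m + 2),
        Finset.sum_range_succ' (fun i => (c j (i + 1) : ℤ) * a (i + 1)) (m + 1),
        Finset.sum_range_succ' (fun i => (c j (i + 2) : ℤ) * a (i + 2)) m]
      ring
    rw [e1]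
    have e2 : ∑ i ∈ Finset.range m, (c j (i + 3) : ℤ) * a (i + 3)
        = ∑ i ∈ Finset.range m, (X (i + 2) : ℤ) * a (i + 3) :=
      Finset.sum_congr rfl fun i _ => by rw [hctail j i]
    rw [e2, ha0, hxsum]
    have e3 : (c j 1 : ℤ) = (X 0 : ℤ) - (j : ℤ) * (A2 : ℤ) := by
      simp only [hc]
      norm_num
      push_cast [Nat.cast_sub f4]
      ring
    have e4 : (c j 2 : ℤ) = (X 1 : ℤ) + (j : ℤ) * (A1 : ℤ) := by
      simp only [hc]
      norm_num
    rw [e3, e4, hcA1, hcA2]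
    ring
  -- membership
  have hmem : ∀ j, ∀ y ∈ L j, y ∈ {y : ℤ | ∃ i ≤ m + 2, y = a i} := by
    intro j y hy
    obtain ⟨i, hi, rfl⟩ := Jlist_mem (c j) a (m + 3) y hy
    exact ⟨i, by omega, rfl⟩
  -- sortedness
  have hsort : ∀ j, (L j).Pairwise (· ≤ ·) := by
    intro j
    exact Jlist_sorted (c j) a (m + 3) (fun i i' hii' hi' => hamono i i' hii' (by omega))
  -- counts of zero
  have hcnt : ∀ j, (L j).count 0 = c j 0 := by
    intro j
    rw [hL, Jlist_count]
    rw [Finset.sum_eq_single_of_mem 0 (Finset.mem_range.2 (by omega))]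
    · rw [if_pos ha0]
    · intro i hi hi0
      have hi' : i < m + 3 := Finset.mem_range.1 hi
      have hpos := hapos i (by omega) (by omega)
      exact if_neg (by omega)
  -- the representation functions
  set f : ℕ → (Fin h → ℤ) := fun j => fun p : Fin h => (L j).getD p.val 0 with hf
  have hrep : ∀ j ∈ Finset.Icc 1 t, IsRep {y : ℤ | ∃ i ≤ m + 2, y = a i} h av (f j) := by
    intro j hj
    obtain ⟨hj1, hjt⟩ := Finset.mem_Icc.1 hj
    exact isRep_of_list _ _ _ _ (hlen j hj1 hjt) (hmem j) (hsort j) (hsums j hj1 hjt)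
  have hinj : Set.InjOn f (Finset.Icc 1 t) := by
    intro j hj j' hj' hfe
    obtain ⟨hj1, hjt⟩ := Finset.mem_Icc.1 (Finset.mem_coe.1 hj)
    obtain ⟨hj1', hjt'⟩ := Finset.mem_Icc.1 (Finset.mem_coe.1 hj')
    have hLL : L j = L j' := by
      apply List.ext_getElem
      · rw [hlen j hj1 hjt, hlen j' hj1' hjt']
      · intro p hp hp'
        have hph : p < h := by rw [← hlen j hj1 hjt]; exact hp
        have hcf := congrFun hfe (⟨p, hph⟩ : Fin h)
        simp only [hf] at hcf
        rw [List.getD_eq_getElem (L j) 0 hp, List.getD_eq_getElem (L j') 0 hp'] at hcf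
        exact hcf
    have hcc : c j 0 = c j' 0 := by
      rw [← hcnt j, ← hcnt j', hLL]
    obtain ⟨g1, g2, g3, g4⟩ := hjfacts j hj1 hjt
    obtain ⟨g1', g2', g3', g4'⟩ := hjfacts j' hj1' hjt'
    have hcc' : j * (A2 - A1) = j' * (A2 - A1) := by
      simp only [hc] at hcc
      norm_num at hcc
      omega
    exact Nat.eq_of_mul_eq_mul_right (by omega) hcc'
  show ∃ S : Finset (Fin h → ℤ), t ≤ S.card ∧ ∀ g ∈ S, IsRep {y : ℤ | ∃ i ≤ m + 2, y = a i} h av g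
  refine ⟨(Finset.Icc 1 t).image f, ?_, ?_⟩
  · rw [Finset.card_image_of_injOn hinj, Nat.card_Icc]
    omega
  · intro g hg
    obtain ⟨j, hj, rfl⟩ := Finset.mem_image.1 hg
    exact hrep j hj
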